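/- (Extended Strong Cycle Lemma) Let q ≥ 0, k ≥ 0, p ≥ 1, and let a be a (k, qk+p)-arrangement. For every integer i with p ≤ i ≤ qk+p, there are at least qk+2p−i zero positions r such that the 0-linearization ending at r has at least i q-good 0-intervals, i.e. |{ j : a_j = 0 and (r,j] is q-good }| ≥ i. -/

import Mathlib

/-- An interval (list of 0's and 1's) is `q`-good if its number of 0's (`false`)
strictly exceeds `q` times its number of 1's (`true`). -/
def QGood (q : ℕ) (I : List Bool) : Prop :=
  q * I.count true < I.count false

/-- The interval `(r, s]` of a cyclic arrangement `a : ZMod n → Bool`: the list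
`a (r+1), …, a s` read cyclically, where `(r, r]` denotes the entire cycle. -/
def interval {n : ℕ} (a : ZMod n → Bool) (r s : ZMod n) : List Bool :=
  (List.range (if s = r then n else (s - r).val)).map
    (fun j => a (r + ((j + 1 : ℕ) : ZMod n)))

/-- For a zero position `r`, `Dset q a r` is the set of zero positions `j` such
that the 0-interval `(r, j]` is `q`-good. -/
def Dset {n : ℕ} (q : ℕ) (a : ZMod n → Bool) (r : ZMod n) : Set (ZMod n) :=
  {j | a j = false ∧ QGood q (interval a r j)}

namespace ESCL



def badFrom (s : ℤ) : List ℤ → ℕ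
  | [] => 0
  | x :: xs => (if s + x ≤ 0 then 1 else 0) + badFrom (s + x) xs

lemma sum_le_length : ∀ (L : List ℤ), (∀ x ∈ L, x ≤ 1) → L.sum ≤ L.length
  | [], _ => by simp
  | x :: xs, h => by
    simp only [List.sum_cons, List.length_cons]
    have h1 := h x (by simp)
    have h2 := sum_le_length xs (fun y hy => h y (by simp [hy]))
    push_cast
    linarith

lemma badFrom_le : ∀ (L : List ℤ), (∀ x ∈ L, x ≤ 1) → ∀ s : ℤ,
    (badFrom s L : ℤ) ≤ L.length - s - L.sum + max s 0
  | [], _, s => by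
    simp only [badFrom, List.length_nil, List.sum_nil, Nat.cast_zero]
    linarith [le_max_left s 0]
  | x :: xs, h, s => by
    have h1 := h x (by simp)
    have h2 := badFrom_le xs (fun y hy => h y (by simp [hy])) (s + x)
    simp only [badFrom, List.length_cons, List.sum_cons]
    rcases le_or_gt (s + x) 0 with hc | hc
    · rw [if_pos hc]
      have : max (s + x) 0 = 0 := max_eq_right hc
      rw [this] at h2
      push_cast
      linarith [le_max_right s 0, le_max_left s 0]
    · rw [if_neg (by linarith)]
      have : max (s + x) 0 = s + x := max_eq_left (by linarith)
      rw [this] at h2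
      push_cast
      linarith [le_max_left s 0, le_max_right s 0]

lemma badFrom_allones : ∀ (L : List ℤ), (∀ x ∈ L, x = 1) → ∀ s : ℤ, 0 ≤ s → badFrom s L = 0
  | [], _, s, _ => rfl
  | x :: xs, h, s, hs => by
    have h1 := h x (by simp)
    subst h1
    simp only [badFrom]
    rw [if_neg (by linarith), badFrom_allones xs (fun y hy => h y (by simp [hy])) (s+1) (by linarith)]

lemma key (c : ℤ) (Z : List ℤ) : ∀ (Y : List ℤ) (s : ℤ), 0 ≤ s + Y.sum →
    badFrom s (Y ++ 1 :: c :: Z) = badFrom s (Y ++ (1 + c) :: Z)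
  | [], s, hs => by
    simp only [List.nil_append, badFrom, List.sum_nil] at *
    rw [if_neg (by linarith)]
    have : s + 1 + c = s + (1 + c) := by ring
    rw [this]
    omega
  | y :: Y, s, hs => by
    show (if s + y ≤ 0 then 1 else 0) + badFrom (s+y) (Y ++ 1 :: c :: Z)
      = (if s + y ≤ 0 then 1 else 0) + badFrom (s+y) (Y ++ (1 + c) :: Z)
    rw [key c Z Y (s + y) (by simp at hs; linarith)]

lemma sum_drop (L : List ℤ) (u : ℕ) : (L.drop u).sum = L.sum - (L.take u).sum := by
  have h := congrArg List.sum (List.take_append_drop u L)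
  rw [List.sum_append] at h
  linarith





lemma exists_good_rotation (L : List ℤ) (n : ℕ) (hlen : L.length = n)
    (hex : ∃ x ∈ L, x ≤ 0) (hsum : 1 ≤ L.sum) :
    ∃ τ < n, (∃ c M, L.rotate τ = c :: M ∧ c ≤ 0) ∧
      ∀ m < n, 1 ≤ ((L.rotate τ).drop m).sum := by
  obtain ⟨x, hxL, hx0⟩ := hex
  have hn : 0 < n := by
    rw [← hlen]
    exact List.length_pos_iff.mpr (List.ne_nil_of_mem hxL)
  obtain ⟨i₀, hi₀, hgx⟩ := List.mem_iff_getElem.mp hxL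
  rw [hlen] at hi₀
  set B := L.rotate i₀ with hB
  have hlenB : B.length = n := by rw [hB, List.length_rotate, hlen]
  have hsumB : B.sum = L.sum := (List.rotate_perm L i₀).sum_eq
  have hlpos : 0 < L.length := by rw [hlen]; exact hn
  have hB0 : B[0]'(by rw [hlenB]; exact hn) ≤ 0 := by
    have h2 : B[0]'(by rw [hlenB]; exact hn) = L[(0 + i₀) % L.length]'(Nat.mod_lt _ hlpos) :=
      List.getElem_rotate L i₀ 0 (by rw [List.length_rotate]; exact hlpos)
    rw [h2]
    have h3 : (0 + i₀) % L.length = i₀ := by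
      simp only [Nat.zero_add]
      rw [hlen]
      exact Nat.mod_eq_of_lt hi₀
    simp only [h3]
    exact hgx ▸ hx0
  set pref : ℕ → ℤ := fun m => (B.take m).sum with hpref
  set P : ℕ → Prop := fun m => 1 ≤ m ∧ m ≤ n ∧ ∀ m', 1 ≤ m' → m' ≤ n → pref m' ≤ pref m
    with hPdef
  haveI : DecidablePred P := Classical.decPred P
  have hPex : ∃ m, P m := by
    have hne : (Finset.Icc 1 n).Nonempty := ⟨1, Finset.mem_Icc.mpr ⟨le_refl 1, hn⟩⟩
    obtain ⟨m0, hm0mem, hm0max⟩ := Finset.exists_max_image (Finset.Icc 1 n) pref hne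
    rw [Finset.mem_Icc] at hm0mem
    exact ⟨m0, hm0mem.1, hm0mem.2, fun m' h1 h2 =>
      hm0max m' (Finset.mem_Icc.mpr ⟨h1, h2⟩)⟩
  set mu := Nat.find hPex with hmu
  obtain ⟨hmu1, hmun, hmumax⟩ : P mu := Nat.find_spec hPex
  have hstrict : ∀ m', 1 ≤ m' → m' < mu → pref m' < pref mu := by
    intro m' h1 h2
    have hnP : ¬ P m' := Nat.find_min hPex h2
    simp only [hPdef] at hnP
    push_neg at hnP
    obtain ⟨m'', hm''1, hm''2, hm''⟩ := hnP h1 (by omega)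
    exact lt_of_lt_of_le hm'' (hmumax m'' hm''1 hm''2)
  refine ⟨(i₀ + mu) % n, Nat.mod_lt _ hn, ?_⟩
  have hrot : L.rotate ((i₀ + mu) % n) = B.drop mu ++ B.take mu := by
    have h1 : B.rotate mu = L.rotate (i₀ + mu) := by
      rw [hB]; exact List.rotate_rotate L i₀ mu
    have h2 : L.rotate ((i₀ + mu) % n) = L.rotate (i₀ + mu) := by
      rw [← hlen]; exact List.rotate_mod L (i₀ + mu)
    rw [h2, ← h1]
    exact List.rotate_eq_drop_append_take (by rw [hlenB]; exact hmun)
  constructor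
  · -- head ≤ 0
    rcases lt_or_ge mu n with hlt | hge
    · have hd : B.drop mu = B[mu]'(by rw [hlenB]; exact hlt) :: B.drop (mu+1) :=
        List.drop_eq_getElem_cons (by rw [hlenB]; exact hlt)
      refine ⟨B[mu]'(by rw [hlenB]; exact hlt), B.drop (mu+1) ++ B.take mu, ?_, ?_⟩
      · rw [hrot, hd, List.cons_append]
      · have hs := List.sum_take_succ B mu (by rw [hlenB]; exact hlt)
        have hle : pref (mu + 1) ≤ pref mu := hmumax (mu+1) (by omega) (by omega)
        rw [hpref] at hle
        simp only at hle
        rw [hs] at hle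
        linarith
    · have hmueq : mu = n := le_antisymm hmun hge
      have hd : B.drop 0 = B[0]'(by rw [hlenB]; exact hn) :: B.drop 1 :=
        List.drop_eq_getElem_cons (by rw [hlenB]; exact hn)
      refine ⟨B[0]'(by rw [hlenB]; exact hn), B.drop 1, ?_, hB0⟩
      have h5 : B.drop mu = [] := List.drop_eq_nil_of_le (by rw [hlenB]; omega)
      have h6 : B.take mu = B := by
        rw [hmueq, ← hlenB, List.take_length]
      rw [hrot, h5, h6, List.nil_append]
      calc B = B.drop 0 := (List.drop_zero (l := B)).symm
        _ = _ := hd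
  · -- suffix positivity
    intro m hm
    rw [hrot]
    rw [List.drop_append]
    have hlendrop : (B.drop mu).length = n - mu := by rw [List.length_drop, hlenB]
    rcases le_or_gt m (n - mu) with hle | hgt
    · have h1 : (B.drop mu).drop m = B.drop (mu + m) := List.drop_drop (i := m) (j := mu) (l := B)
      have h2 : m - (B.drop mu).length = 0 := by omega
      rw [h1, h2, List.drop_zero, List.sum_append, sum_drop]
      have hmum : pref (mu + m) ≤ pref mu := by
        rcases Nat.eq_zero_or_pos m with h0 | h0
        · subst h0; simp
        · exact hmumax (mu + m) (by omega) (by omega)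
      rw [hpref] at hmum
      simp only at hmum
      rw [hsumB]
      linarith
    · have h1 : (B.drop mu).drop m = [] := by
        apply List.drop_eq_nil_of_le
        omega
      rw [h1, List.nil_append, hlendrop, sum_drop, List.take_take]
      have hm2 : (m - (n - mu)) ⊓ mu = m - (n - mu) := by
        apply min_eq_left
        omega
      rw [hm2]
      have hstep := hstrict (m - (n - mu)) (by omega) (by omega)
      rw [hpref] at hstep
      simp only at hstep
      linarith




lemma count_rotations (L : List ℤ) (n : ℕ) (hlen : L.length = n) (hn : 0 < n) (τ : ℕ)
    (hτ : τ ≤ n) (P : List ℤ → Prop) [DecidablePred P] :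
    ((Finset.range n).filter (fun t => P ((L.rotate τ).rotate t))).card
      = ((Finset.range n).filter (fun t => P (L.rotate t))).card := by
  have key1 : ∀ t, (L.rotate τ).rotate t = L.rotate ((τ + t) % n) := by
    intro t
    rw [List.rotate_rotate, ← hlen, List.rotate_mod]
  have key2 : ∀ u < n, (τ + (u + (n - τ)) % n) % n = u := by
    intro u hu
    have e1 : (τ + (u + (n - τ)) % n) ≡ τ + (u + (n - τ)) [MOD n] :=
      (Nat.mod_modEq (u + (n - τ)) n).add_left τ
    have e2 : τ + (u + (n - τ)) = u + n := by omega
    calc (τ + (u + (n - τ)) % n) % n = (τ + (u + (n - τ))) % n := e1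
      _ = (u + n) % n := by rw [e2]
      _ = u % n := Nat.add_mod_right u n
      _ = u := Nat.mod_eq_of_lt hu
  have key3 : ∀ t < n, ((τ + t) % n + (n - τ)) % n = t := by
    intro t ht
    have e1 : ((τ + t) % n + (n - τ)) ≡ (τ + t) + (n - τ) [MOD n] :=
      (Nat.mod_modEq (τ + t) n).add_right (n - τ)
    have e2 : (τ + t) + (n - τ) = t + n := by omega
    calc ((τ + t) % n + (n - τ)) % n = ((τ + t) + (n - τ)) % n := e1
      _ = (t + n) % n := by rw [e2]
      _ = t % n := Nat.add_mod_right t n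
      _ = t := Nat.mod_eq_of_lt ht
  apply Finset.card_bij' (i := fun t _ => (τ + t) % n) (j := fun u _ => (u + (n - τ)) % n)
  · intro t ht
    rw [Finset.mem_filter, Finset.mem_range] at *
    refine ⟨Nat.mod_lt _ hn, ?_⟩
    rw [← key1 t]
    exact ht.2
  · intro u hu
    rw [Finset.mem_filter, Finset.mem_range] at *
    refine ⟨Nat.mod_lt _ hn, ?_⟩
    rw [key1 _]
    have h4 : L.rotate ((τ + (u + (n - τ)) % n) % n) = L.rotate u := by
      rw [key2 u hu.1]
    rw [h4]
    exact hu.2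
  · intro t ht
    rw [Finset.mem_filter, Finset.mem_range] at ht
    exact key3 t ht.1
  · intro u hu
    rw [Finset.mem_filter, Finset.mem_range] at hu
    exact key2 u hu.1




lemma sum_allones : ∀ (L : List ℤ), (∀ x ∈ L, x = 1) → L.sum = L.length
  | [], _ => by simp
  | x :: xs, h => by
    have h1 := h x (by simp)
    have h2 := sum_allones xs (fun y hy => h y (by simp [hy]))
    simp only [List.sum_cons, List.length_cons, h1, h2]
    push_cast
    ring


theorem lemE (n : ℕ) : ∀ (L : List ℤ), L.length = n → (∀ x ∈ L, x ≤ 1) →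
    ∀ p : ℕ, 1 ≤ p → L.sum = (p : ℤ) → ∀ j : ℕ,
    min n (j + p) ≤ ((Finset.range n).filter (fun t => badFrom 0 (L.rotate t) ≤ j)).card := by
  induction n using Nat.strong_induction_on with
  | _ n IH =>
  intro L hlen hle1 p hp hsum j
  by_cases hall : ∀ x ∈ L, x = (1:ℤ)
  · have hfull : ∀ t ∈ Finset.range n, badFrom 0 (L.rotate t) ≤ j := by
      intro t _
      have h0 : badFrom 0 (L.rotate t) = 0 :=
        badFrom_allones (L.rotate t) (fun x hx => hall x ((List.rotate_perm L t).subset hx))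
          0 (le_refl 0)
      omega
    rw [Finset.filter_true_of_mem hfull, Finset.card_range]
    exact min_le_left _ _
  · push_neg at hall
    obtain ⟨x0, hx0L, hx0ne⟩ := hall
    have hx0le : x0 ≤ 0 := by
      have := hle1 x0 hx0L
      omega
    have hex : ∃ x ∈ L, x ≤ 0 := ⟨x0, hx0L, hx0le⟩
    have hn : 0 < n := by
      rw [← hlen]
      exact List.length_pos_iff.mpr (List.ne_nil_of_mem hx0L)
    by_cases hjp : n ≤ j + p
    · have hfull : ∀ t ∈ Finset.range n, badFrom 0 (L.rotate t) ≤ j := by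
        intro t _
        have h1 := badFrom_le (L.rotate t)
          (fun x hx => hle1 x ((List.rotate_perm L t).subset hx)) 0
        rw [List.length_rotate, hlen, (List.rotate_perm L t).sum_eq, hsum] at h1
        simp only [max_self] at h1
        have hplen : (p:ℤ) ≤ (n:ℤ) := by
          have := sum_le_length L hle1
          rw [hsum, hlen] at this
          exact this
        omega
      rw [Finset.filter_true_of_mem hfull, Finset.card_range]
      exact min_le_left _ _
    · push_neg at hjp
      obtain ⟨τ, hτn, ⟨c, M, hA, hc⟩, hSuf⟩ :=
        exists_good_rotation L n hlen hex (by rw [hsum]; exact_mod_cast hp)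
      rw [hA] at hSuf
      have hlenA : (c :: M).length = n := by rw [← hA, List.length_rotate, hlen]
      have hsumA : (c :: M).sum = (p:ℤ) := by
        rw [← hA, (List.rotate_perm L τ).sum_eq, hsum]
      have hleA : ∀ x ∈ (c :: M), x ≤ 1 := fun x hx =>
        hle1 x ((List.rotate_perm L τ).subset (hA ▸ hx))
      have hMne : M ≠ [] := by
        intro hMnil
        rw [hMnil] at hsumA
        simp at hsumA
        omega
      set M₀ := M.dropLast with hM₀
      have hM : M = M₀ ++ [M.getLast hMne] := (List.dropLast_concat_getLast hMne).symm
      have hlenM : M.length = n - 1 := by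
        have := hlenA
        simp at this
        omega
      have hn2 : 2 ≤ n := by
        have : M.length ≥ 1 := List.length_pos_iff.mpr hMne
        omega
      have hlenM₀ : M₀.length = n - 2 := by
        rw [hM₀, List.length_dropLast]
        omega
      have hcM₀len : (c :: M₀).length = n - 1 := by
        simp [hlenM₀]
        omega
      have hAA : c :: M = (c :: M₀) ++ [M.getLast hMne] := by
        rw [List.cons_append, ← hM]
      have hglast : M.getLast hMne = 1 := by
        have h1 := hSuf (n-1) (by omega)
        rw [hAA] at h1
        rw [← hcM₀len, List.drop_left] at h1
        simp at h1
        have h2 : M.getLast hMne ≤ 1 := hleA _ (by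
          rw [hAA]
          exact List.mem_append_right _ (by simp))
        omega
      rw [hglast] at hAA
      -- the merged list
      set A' : List ℤ := (1 + c) :: M₀ with hA'
      have hlenA' : A'.length = n - 1 := by
        simp [hA', hlenM₀]
        omega
      have hsumA' : A'.sum = (p:ℤ) := by
        have h1 : (c :: M).sum = c + (M₀.sum + 1) := by
          rw [hM, hglast]
          simp
        rw [hA']
        simp only [List.sum_cons]
        rw [h1] at hsumA
        linarith
      have hleA' : ∀ x ∈ A', x ≤ 1 := by
        intro x hx
        rw [hA', List.mem_cons] at hx
        rcases hx with h | h
        · omega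
        · exact hleA x (by
            rw [hAA]
            exact List.mem_append_left _ (List.mem_cons_of_mem c h))
      have hIH := IH (n-1) (by omega) A' hlenA' hleA' p hp hsumA' j
      have hmin : min (n-1) (j + p) = j + p := by omega
      rw [hmin] at hIH
      -- correspondence
      have hcorr : ∀ i, 1 ≤ i → i ≤ n - 1 →
          badFrom 0 ((c :: M).rotate i) = badFrom 0 (A'.rotate (i % (n-1))) := by
        intro i hi1 hi2
        obtain ⟨i', rfl⟩ : ∃ i', i = i' + 1 := ⟨i - 1, by omega⟩
        have hYsum : 0 ≤ (M₀.drop i').sum := by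
          have h1 := hSuf (i' + 1) (by omega)
          rw [hAA] at h1
          rcases le_or_gt (i' + 1) (n - 1) with hle | hlt
          · rw [List.drop_append] at h1
            have hz : i' + 1 - (c :: M₀).length = 0 := by omega
            rw [hz, List.drop_zero] at h1
            simp only [List.drop_succ_cons] at h1
            rw [List.sum_append] at h1
            simp at h1
            linarith
          · omega
        rcases lt_or_eq_of_le hi2 with hlt | heq
        · -- i < n - 1, so i' + 1 ≤ n - 2 = M₀.length
          have hmod : (i' + 1) % (n-1) = i' + 1 := Nat.mod_eq_of_lt (by omega)
          rw [hmod]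
          have hrot1 : (c :: M).rotate (i' + 1)
              = M₀.drop i' ++ (1:ℤ) :: c :: M₀.take i' := by
            rw [List.rotate_eq_drop_append_take (by omega)]
            rw [hAA]
            rw [List.cons_append, List.drop_succ_cons, List.take_succ_cons]
            rw [List.drop_append, List.take_append]
            have hz1 : i' - M₀.length = 0 := by omega
            rw [hz1, List.drop_zero, List.take_zero, List.append_nil]
            simp
          have hrot2 : A'.rotate (i' + 1)
              = M₀.drop i' ++ (1 + c) :: M₀.take i' := by
            rw [List.rotate_eq_drop_append_take (by omega)]
            rw [hA']
            rw [List.drop_succ_cons, List.take_succ_cons]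
          rw [hrot1, hrot2]
          exact key c (M₀.take i') (M₀.drop i') 0 (by simpa using hYsum)
        · -- i = n - 1
          rw [heq, Nat.mod_self]
          have hrot1 : (c :: M).rotate (n - 1) = (1:ℤ) :: c :: M₀ := by
            rw [List.rotate_eq_drop_append_take (by omega)]
            rw [hAA]
            rw [← hcM₀len, List.drop_left, List.take_left]
            simp
          have hrot2 : A'.rotate 0 = A' := List.rotate_zero A'
          rw [hrot1, hrot2, hA']
          have hkey := key c M₀ [] 0 (by simp)
          simpa using hkey
      -- counting
      have hbij : ((Finset.Icc 1 (n-1)).filter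
            (fun i => badFrom 0 ((c :: M).rotate i) ≤ j)).card
          = ((Finset.range (n-1)).filter (fun t => badFrom 0 (A'.rotate t) ≤ j)).card := by
        apply Finset.card_bij (i := fun i _ => i % (n-1))
        · intro i hi
          rw [Finset.mem_filter, Finset.mem_Icc] at hi
          rw [Finset.mem_filter, Finset.mem_range]
          constructor
          · exact Nat.mod_lt _ (by omega)
          · rw [← hcorr i hi.1.1 hi.1.2]
            exact hi.2
        · intro a₁ h₁ a₂ h₂ he
          rw [Finset.mem_filter, Finset.mem_Icc] at h₁ h₂
          rcases lt_or_eq_of_le h₁.1.2 with hl1 | he1 <;>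
            rcases lt_or_eq_of_le h₂.1.2 with hl2 | he2
          · rwa [Nat.mod_eq_of_lt hl1, Nat.mod_eq_of_lt hl2] at he
          · rw [Nat.mod_eq_of_lt hl1, he2, Nat.mod_self] at he
            omega
          · rw [Nat.mod_eq_of_lt hl2, he1, Nat.mod_self] at he
            omega
          · omega
        · intro t ht
          rw [Finset.mem_filter, Finset.mem_range] at ht
          by_cases ht0 : t = 0
          · refine ⟨n-1, ?_, ?_⟩
            · rw [Finset.mem_filter, Finset.mem_Icc]
              refine ⟨⟨by omega, le_refl _⟩, ?_⟩
              rw [hcorr (n-1) (by omega) (le_refl _), Nat.mod_self, ← ht0]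
              exact ht.2
            · rw [Nat.mod_self, ht0]
          · refine ⟨t, ?_, ?_⟩
            · rw [Finset.mem_filter, Finset.mem_Icc]
              refine ⟨⟨by omega, by omega⟩, ?_⟩
              rw [hcorr t (by omega) (by omega), Nat.mod_eq_of_lt (by omega)]
              exact ht.2
            · exact Nat.mod_eq_of_lt (by omega)
      have hsub : ((Finset.Icc 1 (n-1)).filter
            (fun i => badFrom 0 ((c :: M).rotate i) ≤ j))
          ⊆ (Finset.range n).filter (fun i => badFrom 0 ((c :: M).rotate i) ≤ j) := by
        intro i hi
        rw [Finset.mem_filter, Finset.mem_Icc] at hi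
        rw [Finset.mem_filter, Finset.mem_range]
        exact ⟨by omega, hi.2⟩
      have hcount := count_rotations L n hlen hn τ (by omega) (fun X => badFrom 0 X ≤ j)
      have hchain : j + p ≤ ((Finset.range n).filter
          (fun t => badFrom 0 (L.rotate t) ≤ j)).card := by
        calc j + p ≤ ((Finset.range (n-1)).filter
              (fun t => badFrom 0 (A'.rotate t) ≤ j)).card := hIH
          _ = ((Finset.Icc 1 (n-1)).filter
              (fun i => badFrom 0 ((c :: M).rotate i) ≤ j)).card := hbij.symm
          _ ≤ ((Finset.range n).filter
              (fun i => badFrom 0 ((c :: M).rotate i) ≤ j)).card := Finset.card_le_card hsub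
          _ = ((Finset.range n).filter
              (fun t => badFrom 0 ((L.rotate τ).rotate t) ≤ j)).card := by rw [hA]
          _ = _ := hcount
      omega




def wt (q : ℕ) (b : Bool) : ℤ := if b then -(q:ℤ) else 1

def wsum (q : ℕ) (B : List Bool) : ℤ := (B.map (wt q)).sum

def blockify (q : ℕ) : List Bool → List ℤ
  | [] => []
  | true :: B => match blockify q B with
    | [] => []
    | e :: es => (e - q) :: es
  | false :: B => 1 :: blockify q B

lemma blockify_true (q : ℕ) (B : List Bool) :
    blockify q (true :: B) = match blockify q B with
      | [] => [] | e :: es => (e - (q:ℤ)) :: es := rfl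

lemma blockify_false (q : ℕ) (B : List Bool) :
    blockify q (false :: B) = 1 :: blockify q B := rfl

lemma length_blockify (q : ℕ) : ∀ (B : List Bool), (blockify q B).length = B.count false
  | [] => by simp [blockify]
  | true :: B => by
    have ih := length_blockify q B
    cases h : blockify q B with
    | nil =>
      rw [blockify_true, h]
      rw [h] at ih
      simp at ih ⊢
      omega
    | cons e es =>
      rw [blockify_true, h]
      rw [h] at ih
      simp at ih ⊢
      omega
  | false :: B => by
    have ih := length_blockify q B
    simp only [blockify, List.length_cons, List.count_cons]
    simp [ih]

lemma blockify_le_one (q : ℕ) : ∀ (B : List Bool), ∀ e ∈ blockify q B, e ≤ 1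
  | [] => by simp [blockify]
  | true :: B => by
    intro e he
    cases h : blockify q B with
    | nil => rw [blockify, h] at he; simp at he
    | cons e0 es =>
      rw [blockify, h] at he
      simp only [List.mem_cons] at he
      rcases he with he | he
      · have h0 : e0 ≤ 1 := blockify_le_one q B e0 (by rw [h]; simp)
        have hq : (0:ℤ) ≤ q := by positivity
        omega
      · exact blockify_le_one q B e (by rw [h]; simp [he])
  | false :: B => by
    intro e he
    rw [blockify] at he
    simp only [List.mem_cons] at he
    rcases he with he | he
    · omega
    · exact blockify_le_one q B e he

lemma blockify_ne_nil (q : ℕ) (U : List Bool) : blockify q (U ++ [false]) ≠ [] := by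
  intro h
  have := length_blockify q (U ++ [false])
  rw [h] at this
  simp at this

lemma blockify_append (q : ℕ) : ∀ (U V : List Bool),
    blockify q (U ++ false :: V) = blockify q (U ++ [false]) ++ blockify q V
  | [], V => by simp [blockify]
  | true :: U, V => by
    have ih := blockify_append q U V
    obtain ⟨e, es, hes⟩ := List.exists_cons_of_ne_nil (blockify_ne_nil q U)
    have h1 : blockify q (U ++ false :: V) = e :: (es ++ blockify q V) := by
      rw [ih, hes]; rfl
    show blockify q (true :: (U ++ false :: V)) = blockify q (true :: (U ++ [false])) ++ _
    rw [blockify_true, blockify_true, h1, hes]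
    rfl
  | false :: U, V => by
    have ih := blockify_append q U V
    show blockify q (false :: (U ++ false :: V)) = blockify q (false :: (U ++ [false])) ++ _
    rw [blockify_false, blockify_false, ih]
    rfl

lemma sum_blockify (q : ℕ) : ∀ (B : List Bool),
    (blockify q (B ++ [false])).sum = wsum q (B ++ [false])
  | [] => by simp [blockify, wsum, wt]
  | true :: B => by
    have ih := sum_blockify q B
    obtain ⟨e, es, hes⟩ := List.exists_cons_of_ne_nil (blockify_ne_nil q B)
    show (blockify q (true :: (B ++ [false]))).sum = wsum q (true :: (B ++ [false]))
    rw [blockify, hes]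
    rw [hes] at ih
    simp only [List.sum_cons] at ih ⊢
    simp only [wsum, List.map_cons, List.sum_cons, wt, if_pos]
    rw [show wsum q (B ++ [false]) = ((B ++ [false]).map (wt q)).sum from rfl] at ih
    linarith
  | false :: B => by
    have ih := sum_blockify q B
    show (blockify q (false :: (B ++ [false]))).sum = wsum q (false :: (B ++ [false]))
    rw [blockify]
    simp only [List.sum_cons, wsum, List.map_cons, List.sum_cons, wt, if_neg Bool.false_ne_true]
    rw [show wsum q (B ++ [false]) = ((B ++ [false]).map (wt q)).sum from rfl] at ih
    simp at ih ⊢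
    linarith

lemma range_succ_insert (m : ℕ) :
    Finset.range (m+1) = insert 0 ((Finset.range m).image (· + 1)) := by
  ext x
  simp only [Finset.mem_range, Finset.mem_insert, Finset.mem_image]
  constructor
  · intro h
    rcases Nat.eq_zero_or_pos x with h0 | h0
    · exact Or.inl h0
    · exact Or.inr ⟨x - 1, by omega, by omega⟩
  · rintro (rfl | ⟨y, hy, rfl⟩)
    · omega
    · show y + 1 < m + 1
      omega

lemma card_filter_range_succ (m : ℕ) (P : ℕ → Prop) [DecidablePred P] :
    ((Finset.range (m+1)).filter P).card
      = (if P 0 then 1 else 0) + ((Finset.range m).filter (fun x => P (x+1))).card := by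
  rw [range_succ_insert, Finset.filter_insert]
  have himg : ((Finset.range m).image (· + 1)).filter P
      = ((Finset.range m).filter (fun x => P (x+1))).image (· + 1) := by
    ext y
    simp only [Finset.mem_filter, Finset.mem_image, Finset.mem_range]
    constructor
    · rintro ⟨⟨z, hz, rfl⟩, hP⟩
      exact ⟨z, ⟨hz, hP⟩, rfl⟩
    · rintro ⟨z, ⟨hz, hP⟩, rfl⟩
      exact ⟨⟨z, hz, rfl⟩, hP⟩
  have hinj : Function.Injective (· + 1 : ℕ → ℕ) := fun a b h => by simp only at h; omega
  by_cases h : P 0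
  · rw [if_pos h, if_pos h, himg]
    rw [Finset.card_insert_of_notMem (by
      rw [Finset.mem_image]
      rintro ⟨y, -, hy⟩
      omega)]
    rw [Finset.card_image_of_injective _ hinj]
    omega
  · rw [if_neg h, if_neg h, himg, Finset.card_image_of_injective _ hinj]
    simp

lemma badFrom_blockify (q : ℕ) : ∀ (B : List Bool) (s : ℤ),
    badFrom s (blockify q B)
      = ((Finset.range B.length).filter
          (fun x => B.getD x true = false ∧ s + wsum q (B.take (x+1)) ≤ 0)).card
  | [], s => by simp [blockify, badFrom]
  | b :: B, s => by
    have hsucc := card_filter_range_succ B.length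
      (fun x => (b :: B).getD x true = false ∧ s + wsum q ((b :: B).take (x+1)) ≤ 0)
    rw [show (b :: B).length = B.length + 1 from rfl, hsucc]
    cases b
    · -- b = false
      have htail : ((Finset.range B.length).filter
            (fun x => (false :: B).getD (x+1) true = false
              ∧ s + wsum q ((false :: B).take (x+1+1)) ≤ 0)).card
          = ((Finset.range B.length).filter
            (fun x => B.getD x true = false ∧ (s+1) + wsum q (B.take (x+1)) ≤ 0)).card := by
        congr 1
        apply Finset.filter_congr
        intro x _
        have h2 : wsum q ((false :: B).take (x+1+1)) = 1 + wsum q (B.take (x+1)) := by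
          simp [wsum, List.take_succ_cons, wt]
        rw [h2]
        constructor
        · rintro ⟨ha, hb⟩; exact ⟨ha, by linarith⟩
        · rintro ⟨ha, hb⟩; exact ⟨ha, by linarith⟩
      rw [htail]
      rw [show blockify q (false :: B) = 1 :: blockify q B from rfl]
      rw [show badFrom s (1 :: blockify q B)
        = (if s + 1 ≤ 0 then 1 else 0) + badFrom (s + 1) (blockify q B) from rfl]
      rw [badFrom_blockify q B (s+1)]
      congr 1
      have h0 : ((false :: B).getD 0 true = false
          ∧ s + wsum q ((false :: B).take (0+1)) ≤ 0) ↔ (s + 1 ≤ 0) := by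
        simp [wsum, wt]
      by_cases h : s + 1 ≤ 0
      · rw [if_pos h, if_pos (h0.mpr h)]
      · rw [if_neg h, if_neg (fun hc => h (h0.mp hc))]
    · -- b = true
      have hhead : ¬ ((true :: B).getD 0 true = false
          ∧ s + wsum q ((true :: B).take (0+1)) ≤ 0) := by
        rintro ⟨hc, -⟩
        simp at hc
      rw [if_neg hhead, Nat.zero_add]
      have htail : ((Finset.range B.length).filter
            (fun x => (true :: B).getD (x+1) true = false
              ∧ s + wsum q ((true :: B).take (x+1+1)) ≤ 0)).card
          = ((Finset.range B.length).filter
            (fun x => B.getD x true = false ∧ (s - q) + wsum q (B.take (x+1)) ≤ 0)).card := by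
        congr 1
        apply Finset.filter_congr
        intro x _
        have h2 : wsum q ((true :: B).take (x+1+1)) = -(q:ℤ) + wsum q (B.take (x+1)) := by
          simp [wsum, List.take_succ_cons, wt]
        rw [h2]
        constructor
        · rintro ⟨ha, hb⟩; exact ⟨ha, by linarith⟩
        · rintro ⟨ha, hb⟩; exact ⟨ha, by linarith⟩
      rw [htail, ← badFrom_blockify q B (s - q)]
      cases h : blockify q B with
      | nil =>
        rw [blockify_true, h]
        rfl
      | cons e es =>
        rw [blockify_true, h]
        show (if s + (e - q) ≤ 0 then 1 else 0) + badFrom (s + (e - q)) es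
          = (if s - q + e ≤ 0 then 1 else 0) + badFrom (s - q + e) es
        have he : s + (e - q) = s - q + e := by ring
        rw [he]

lemma count_eq_card_filter_range : ∀ (B : List Bool) (b : Bool),
    B.count b = ((Finset.range B.length).filter (fun x => B.getD x (!b) = b)).card
  | [], b => by simp
  | c :: B, b => by
    have ih := count_eq_card_filter_range B b
    rw [show (c :: B).length = B.length + 1 from rfl, card_filter_range_succ]
    have htail : ((Finset.range B.length).filter
          (fun x => (c :: B).getD (x+1) (!b) = b)).card
        = ((Finset.range B.length).filter (fun x => B.getD x (!b) = b)).card := by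
      congr 1
    rw [htail, ← ih, List.count_cons]
    have h0 : (c :: B).getD 0 (!b) = c := rfl
    by_cases hc : c = b
    · rw [if_pos (show (c == b) = true by simp [hc]),
        if_pos (show ((c :: B).getD 0 (!b)) = b by rw [h0, hc])]
      omega
    · rw [if_neg (show ¬ (c == b) = true by simp [hc]),
        if_neg (show ¬ ((c :: B).getD 0 (!b)) = b by rw [h0]; exact hc)]
      omega

lemma wsum_count (q : ℕ) : ∀ (I : List Bool),
    wsum q I = (I.count false : ℤ) - q * (I.count true)
  | [] => by simp [wsum]
  | b :: I => by
    have ih := wsum_count q I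
    cases b <;>
      simp only [wsum, List.map_cons, List.sum_cons, List.count_cons, wt] <;>
      rw [show ((I.map (wt q)).sum) = wsum q I from rfl, ih] <;>
      simp <;> push_cast <;> ring

lemma card_filter_range_zmod {n : ℕ} [NeZero n] (ρ : ZMod n) (P : ZMod n → Prop)
    [DecidablePred P] :
    ((Finset.range n).filter (fun x => P (ρ + ((x+1 : ℕ) : ZMod n)))).card
      = (Finset.univ.filter P).card := by
  have hn : 0 < n := Nat.pos_of_ne_zero (NeZero.ne n)
  apply Finset.card_bij (i := fun x _ => ρ + ((x+1 : ℕ) : ZMod n))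
  · intro x hx
    rw [Finset.mem_filter] at hx
    exact Finset.mem_filter.mpr ⟨Finset.mem_univ _, hx.2⟩
  · intro x₁ h₁ x₂ h₂ he
    rw [Finset.mem_filter, Finset.mem_range] at h₁ h₂
    have he2 : ((x₁+1 : ℕ) : ZMod n) = ((x₂+1 : ℕ) : ZMod n) := by
      have := add_left_cancel he
      exact this
    rw [ZMod.natCast_eq_natCast_iff] at he2
    have he3 : (x₁+1) % n = (x₂+1) % n := he2
    have hm : ∀ x : ℕ, x < n → (x+1) % n = if x + 1 = n then 0 else x+1 := by
      intro x hx
      split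
      · rename_i hxn
        rw [hxn, Nat.mod_self]
      · exact Nat.mod_eq_of_lt (by omega)
    rw [hm x₁ h₁.1, hm x₂ h₂.1] at he3
    split at he3 <;> split at he3 <;> omega
  · intro j hj
    rw [Finset.mem_filter] at hj
    refine ⟨(j - ρ - 1).val, ?_, ?_⟩
    · rw [Finset.mem_filter, Finset.mem_range]
      constructor
      · exact ZMod.val_lt _
      · have hc : ρ + (((j - ρ - 1).val + 1 : ℕ) : ZMod n) = j := by
          push_cast
          rw [ZMod.natCast_rightInverse (j - ρ - 1)]
          ring
        rw [hc]
        exact hj.2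
    · push_cast
      rw [ZMod.natCast_rightInverse (j - ρ - 1)]
      ring


instance (q : ℕ) (I : List Bool) : Decidable (QGood q I) := by
  unfold QGood; infer_instance

lemma qgood_iff (q : ℕ) (I : List Bool) : QGood q I ↔ 1 ≤ wsum q I := by
  unfold QGood
  rw [wsum_count]
  constructor
  · intro h
    have h' : ((q * I.count true : ℕ) : ℤ) < ((I.count false : ℕ) : ℤ) := by exact_mod_cast h
    push_cast at h'
    linarith
  · intro h
    have h' : ((q * I.count true : ℕ) : ℤ) < ((I.count false : ℕ) : ℤ) := by
      push_cast
      linarith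
    exact_mod_cast h'

theorem escl_aux (q k p : ℕ) (hp : 1 ≤ p) (n l : ℕ) [NeZero n]
    (hnl : n = l + k) (hl_def : l = q * k + p)
    (a : ZMod n → Bool)
    (htrue : (Finset.univ.filter (fun r : ZMod n => a r = true)).card = k) :
    ∀ i : ℕ, p ≤ i → i ≤ l →
      l + p - i ≤
        (Finset.univ.filter
          (fun r : ZMod n => a r = false ∧ i ≤ (Dset q a r).ncard)).card := by
  intro i hpi hil
  have hnpos : 0 < n := Nat.pos_of_ne_zero (NeZero.ne n)
  have hlpos : 0 < l := by omega
  have hcardU : (Finset.univ : Finset (ZMod n)).card = n := by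
    rw [Finset.card_univ, ZMod.card]
  have hfalse : (Finset.univ.filter (fun r : ZMod n => a r = false)).card = l := by
    have hsplit := Finset.card_filter_add_card_filter_not
      (s := (Finset.univ : Finset (ZMod n))) (p := fun r => a r = true)
    have hneg : (Finset.univ.filter (fun r : ZMod n => ¬ a r = true))
        = Finset.univ.filter (fun r : ZMod n => a r = false) := by
      apply Finset.filter_congr
      intro r _
      simp
    rw [hneg, htrue, hcardU] at hsplit
    omega
  set Z := Finset.univ.filter (fun r : ZMod n => a r = false) with hZ
  have hZne : Z.Nonempty := Finset.card_pos.mp (by rw [hfalse]; omega)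
  obtain ⟨ρ, hρZ⟩ := hZne
  have hρ : a ρ = false := (Finset.mem_filter.mp hρZ).2
  -- linearizations
  set lin : ZMod n → List Bool :=
    fun r => (List.range n).map (fun x => a (r + ((x+1 : ℕ) : ZMod n))) with hlin
  have hlenlin : ∀ r, (lin r).length = n := by intro r; simp [hlin]
  have hget : ∀ (r : ZMod n) (y : ℕ) (hy : y < (lin r).length),
      (lin r)[y] = a (r + ((y+1 : ℕ) : ZMod n)) := by
    intro r y hy
    simp [hlin]
  have hgetD : ∀ (r : ZMod n) (dflt : Bool) (y : ℕ), y < n →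
      (lin r).getD y dflt = a (r + ((y+1 : ℕ) : ZMod n)) := by
    intro r dflt y hy
    rw [List.getD_eq_getElem _ _ (by rw [hlenlin]; exact hy), hget]
  set C := lin ρ with hC
  have hlenC : C.length = n := hlenlin ρ
  have htake : ∀ (r : ZMod n) (m : ℕ), m ≤ n →
      (lin r).take m = (List.range m).map (fun x => a (r + ((x+1 : ℕ) : ZMod n))) := by
    intro r m hm
    rw [hlin]
    simp only
    rw [← List.map_take, List.take_range, min_eq_left hm]
  have hintv : ∀ (r j : ZMod n),
      interval a r j = (lin r).take (if j = r then n else (j - r).val) := by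
    intro r j
    unfold interval
    have hb : (if j = r then n else (j - r).val) ≤ n := by
      split
      · exact le_refl n
      · exact le_of_lt (ZMod.val_lt _)
    rw [htake r _ hb]
  have hdval : ∀ (r : ZMod n) (x : ℕ), x < n →
      (if r + ((x+1 : ℕ) : ZMod n) = r then n
        else ((r + ((x+1:ℕ):ZMod n)) - r).val) = x + 1 := by
    intro r x hx
    have hsub : (r + ((x+1:ℕ):ZMod n)) - r = ((x+1:ℕ):ZMod n) := by ring
    rcases eq_or_lt_of_le (show x + 1 ≤ n by omega) with heq | hlt
    · have hz : ((x+1:ℕ):ZMod n) = 0 := by rw [heq]; exact ZMod.natCast_self n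
      rw [if_pos (by rw [hz, add_zero])]
      omega
    · have hvv : ((x+1:ℕ):ZMod n).val = x + 1 := ZMod.val_cast_of_lt hlt
      have hne : r + ((x+1:ℕ):ZMod n) ≠ r := by
        intro hcon
        have h0 : ((x+1:ℕ):ZMod n) = 0 := by
          have := add_left_cancel (a := r) (b := ((x+1:ℕ):ZMod n)) (c := 0)
            (by rw [hcon, add_zero])
          exact this
        rw [h0, ZMod.val_zero] at hvv
        omega
      rw [if_neg hne, hsub, hvv]
  have hintv2 : ∀ (r : ZMod n) (x : ℕ), x < n →
      interval a r (r + ((x+1:ℕ):ZMod n)) = (lin r).take (x+1) := by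
    intro r x hx
    rw [hintv, hdval r x hx]
  -- d
  set d : ZMod n → ℕ := fun r => if r = ρ then n else (r - ρ).val with hd
  have hd1 : ∀ r, 1 ≤ d r := by
    intro r
    rw [hd]
    simp only
    split
    · omega
    · rename_i h
      have h1 : r - ρ ≠ 0 := sub_ne_zero.mpr h
      have h2 : (r - ρ).val ≠ 0 := fun hc => h1 ((ZMod.val_eq_zero _).mp hc)
      omega
  have hdn : ∀ r, d r ≤ n := by
    intro r
    rw [hd]
    simp only
    split
    · exact le_refl n
    · exact le_of_lt (ZMod.val_lt _)
  have hdcast : ∀ r, ρ + ((d r : ℕ) : ZMod n) = r := by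
    intro r
    rw [hd]
    simp only
    split
    · rename_i h
      rw [ZMod.natCast_self, add_zero, h]
    · rw [ZMod.natCast_rightInverse (r - ρ)]
      ring
  have hdinj : ∀ r₁ r₂, d r₁ = d r₂ → r₁ = r₂ := by
    intro r₁ r₂ h
    rw [← hdcast r₁, ← hdcast r₂, h]
  have hrotlin : ∀ r, lin r = C.rotate (d r) := by
    intro r
    apply List.ext_getElem
    · rw [hlenlin, List.length_rotate, hlenC]
    · intro y h₁ h₂
      rw [hget]
      have h3 : (C.rotate (d r))[y]'h₂
          = C[(y + d r) % C.length]'(Nat.mod_lt _ (by rw [hlenC]; exact hnpos)) :=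
        List.getElem_rotate C (d r) y h₂
      rw [h3, hget ρ _ _]
      have hmodcast : ((((y + d r) % C.length) + 1 : ℕ) : ZMod n)
          = ((y + d r + 1 : ℕ) : ZMod n) := by
        rw [hlenC]
        push_cast [ZMod.natCast_mod]
        ring
      rw [hmodcast]
      have harg : ρ + ((y + d r + 1 : ℕ) : ZMod n) = r + ((y+1 : ℕ) : ZMod n) := by
        calc ρ + ((y + d r + 1 : ℕ) : ZMod n)
            = (ρ + ((d r : ℕ) : ZMod n)) + ((y + 1 : ℕ) : ZMod n) := by push_cast; ring
          _ = r + ((y + 1 : ℕ) : ZMod n) := by rw [hdcast r]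
      exact congrArg a harg.symm
  -- E and counts
  set E := blockify q C with hE
  have hcountfalseC : C.count false = l := by
    rw [count_eq_card_filter_range C false, hlenC]
    have hcong : (Finset.range n).filter (fun x => C.getD x (!false) = false)
        = (Finset.range n).filter (fun x => a (ρ + ((x+1:ℕ):ZMod n)) = false) := by
      apply Finset.filter_congr
      intro x hx
      rw [Finset.mem_range] at hx
      rw [show (!false) = true from rfl, hC, hgetD ρ true x hx]
    rw [hcong, card_filter_range_zmod ρ (fun j => a j = false)]
    exact hfalse
  have hcounttrueC : C.count true = k := by
    rw [count_eq_card_filter_range C true, hlenC]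
    have hcong : (Finset.range n).filter (fun x => C.getD x (!true) = true)
        = (Finset.range n).filter (fun x => a (ρ + ((x+1:ℕ):ZMod n)) = true) := by
      apply Finset.filter_congr
      intro x hx
      rw [Finset.mem_range] at hx
      rw [show (!true) = false from rfl, hC, hgetD ρ false x hx]
    rw [hcong, card_filter_range_zmod ρ (fun j => a j = true)]
    exact htrue
  have hCne : C ≠ [] := by
    intro h
    rw [h] at hlenC
    simp at hlenC
    omega
  have hClast : C = C.dropLast ++ [false] := by
    have hgl : C.getLast hCne = false := by
      rw [List.getLast_eq_getElem, hget ρ _ _]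
      have hz : ((C.length - 1 + 1 : ℕ) : ZMod n) = 0 := by
        rw [hlenC, show n - 1 + 1 = n by omega]
        exact ZMod.natCast_self n
      rw [hz, add_zero]
      exact hρ
    conv_lhs => rw [← List.dropLast_concat_getLast hCne]
    rw [hgl]
  have hsumE : E.sum = (p : ℤ) := by
    calc E.sum = (blockify q (C.dropLast ++ [false])).sum := by rw [hE, ← hClast]
      _ = wsum q (C.dropLast ++ [false]) := sum_blockify q C.dropLast
      _ = wsum q C := by rw [← hClast]
      _ = (C.count false : ℤ) - q * (C.count true) := wsum_count q C
      _ = (p : ℤ) := by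
          rw [hcountfalseC, hcounttrueC, hl_def]
          push_cast
          ring
  have hlenE : E.length = l := by rw [hE, length_blockify, hcountfalseC]
  have hleE : ∀ e ∈ E, e ≤ 1 := by rw [hE]; exact blockify_le_one q C
  -- t
  set t : ZMod n → ℕ := fun r => (C.take (d r)).count false with ht
  have htakedec : ∀ r, a r = false → C.take (d r) = C.take (d r - 1) ++ [false] := by
    intro r hr
    have h1 : d r - 1 < C.length := by
      rw [hlenC]
      have := hdn r
      have := hd1 r
      omega
    have h2 : C[d r - 1]'h1 = false := by
      rw [hget ρ _ _]
      have he : ((d r - 1 + 1 : ℕ) : ZMod n) = ((d r : ℕ) : ZMod n) := by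
        congr 1
        have := hd1 r
        omega
      rw [he, hdcast r]
      exact hr
    conv_lhs => rw [show d r = (d r - 1) + 1 by have := hd1 r; omega]
    rw [List.take_succ]
    congr 1
    rw [List.getElem?_eq_getElem h1, h2]
    rfl
  have ht1 : ∀ r, a r = false → 1 ≤ t r := by
    intro r hr
    rw [ht]
    simp only
    rw [htakedec r hr, List.count_append]
    simp
  have htl : ∀ r, t r ≤ l := by
    intro r
    rw [← hcountfalseC]
    exact List.Sublist.count_le false (List.take_sublist _ _)
  -- blockify rotation
  have hblockrot : ∀ r, a r = false → blockify q (lin r) = E.rotate (t r) := by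
    intro r hr
    by_cases hrρ : r = ρ
    · have hdr : d r = n := by rw [hd]; simp only; rw [if_pos hrρ]
      have htr : t r = l := by
        rw [ht]
        simp only
        rw [hdr, ← hlenC, List.take_length, hcountfalseC]
      rw [htr, ← hlenE, List.rotate_length, hrρ, ← hC, hE]
    · have hdrn : d r < n := by
        rw [hd]
        simp only
        rw [if_neg hrρ]
        exact ZMod.val_lt _
      have hdr1 := hd1 r
      set U := C.take (d r) with hU
      set V := C.drop (d r) with hV
      have hUV : C = U ++ V := (List.take_append_drop _ C).symm
      have hUdec : U = C.take (d r - 1) ++ [false] := htakedec r hr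
      have hVdec : V = C.dropLast.drop (d r) ++ [false] := by
        rw [hV]
        conv_lhs => rw [hClast]
        rw [List.drop_append]
        have hz : d r - C.dropLast.length = 0 := by
          rw [List.length_dropLast, hlenC]
          omega
        rw [hz, List.drop_zero]
      have hEsplit : E = blockify q U ++ blockify q V := by
        rw [hE]
        conv_lhs => rw [hUV, hUdec]
        rw [List.append_assoc, List.singleton_append, blockify_append, ← hUdec]
      have hlinVU : lin r = V ++ U := by
        rw [hrotlin r]
        exact List.rotate_eq_drop_append_take (by rw [hlenC]; omega)
      have hblockVU : blockify q (lin r) = blockify q V ++ blockify q U := by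
        rw [hlinVU]
        conv_lhs => rw [hVdec]
        rw [List.append_assoc, List.singleton_append, blockify_append, ← hVdec]
      have hlenbU : (blockify q U).length = t r := by rw [length_blockify, ht]
      rw [hblockVU, hEsplit]
      rw [List.rotate_eq_drop_append_take (by
        rw [List.length_append, hlenbU]
        omega)]
      rw [← hlenbU, List.drop_left, List.take_left]
  -- bad count
  have hbadN : ∀ r, a r = false →
      badFrom 0 (blockify q (lin r))
        = (Finset.univ.filter
            (fun j => a j = false ∧ wsum q (interval a r j) ≤ 0)).card := by
    intro r hr
    rw [badFrom_blockify, hlenlin r]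
    have hcong : (Finset.range n).filter
        (fun x => (lin r).getD x true = false ∧ (0:ℤ) + wsum q ((lin r).take (x+1)) ≤ 0)
        = (Finset.range n).filter
          (fun x => a (r + ((x+1:ℕ):ZMod n)) = false
            ∧ wsum q (interval a r (r + ((x+1:ℕ):ZMod n))) ≤ 0) := by
      apply Finset.filter_congr
      intro x hx
      rw [Finset.mem_range] at hx
      rw [hgetD r true x hx, hintv2 r x hx, zero_add]
    rw [hcong, card_filter_range_zmod r (fun j => a j = false ∧ wsum q (interval a r j) ≤ 0)]
  have hDn : ∀ r : ZMod n, (Dset q a r).ncard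
      = (Finset.univ.filter
          (fun j => a j = false ∧ 1 ≤ wsum q (interval a r j))).card := by
    intro r
    rw [show Dset q a r = {j | a j = false ∧ QGood q (interval a r j)} from rfl]
    rw [Set.ncard_eq_toFinset_card', Set.toFinset_setOf]
    congr 1
    apply Finset.filter_congr
    intro j _
    rw [qgood_iff]
  have hDNsum : ∀ r : ZMod n,
      (Finset.univ.filter (fun j => a j = false ∧ 1 ≤ wsum q (interval a r j))).card
      + (Finset.univ.filter (fun j => a j = false ∧ wsum q (interval a r j) ≤ 0)).card
      = l := by
    intro r
    have h1 : Finset.univ.filter (fun j => a j = false ∧ 1 ≤ wsum q (interval a r j))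
        = Z.filter (fun j => 1 ≤ wsum q (interval a r j)) := by
      rw [hZ, Finset.filter_filter]
    have h2 : Finset.univ.filter (fun j => a j = false ∧ wsum q (interval a r j) ≤ 0)
        = Z.filter (fun j => wsum q (interval a r j) ≤ 0) := by
      rw [hZ, Finset.filter_filter]
    rw [h1, h2]
    have h3 := Finset.card_filter_add_card_filter_not
      (s := Z) (p := fun j => 1 ≤ wsum q (interval a r j))
    have h4 : Z.filter (fun j => ¬ 1 ≤ wsum q (interval a r j))
        = Z.filter (fun j => wsum q (interval a r j) ≤ 0) := by
      apply Finset.filter_congr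
      intro j _
      constructor
      · intro h
        omega
      · intro h
        omega
    rw [h4] at h3
    rw [h3]
    exact hfalse
  -- injectivity of t on zeros
  have hmono : ∀ r₁ r₂, a r₁ = false → a r₂ = false → d r₁ < d r₂ → t r₁ < t r₂ := by
    intro r₁ r₂ h₁ h₂ hlt
    have e2 : t r₂ = (C.take (d r₂ - 1)).count false + 1 := by
      rw [ht]
      simp only
      rw [htakedec r₂ h₂, List.count_append]
      simp
    have e1 : t r₁ ≤ (C.take (d r₂ - 1)).count false := by
      rw [ht]
      simp only
      have hsub : C.take (d r₁) = (C.take (d r₂ - 1)).take (d r₁) := by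
        rw [List.take_take, min_eq_left (by omega)]
      rw [hsub]
      exact List.Sublist.count_le false (List.take_sublist _ _)
    omega
  have htinj : ∀ r₁ r₂, a r₁ = false → a r₂ = false → t r₁ = t r₂ → r₁ = r₂ := by
    intro r₁ r₂ h₁ h₂ he
    rcases lt_trichotomy (d r₁) (d r₂) with h | h | h
    · have := hmono r₁ r₂ h₁ h₂ h
      omega
    · exact hdinj _ _ h
    · have := hmono r₂ r₁ h₂ h₁ h
      omega
  set φ : ZMod n → ℕ := fun r => t r % l with hφ
  have hφinj : ∀ r₁ r₂, a r₁ = false → a r₂ = false → φ r₁ = φ r₂ → r₁ = r₂ := by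
    intro r₁ r₂ h₁ h₂ he
    apply htinj r₁ r₂ h₁ h₂
    rw [hφ] at he
    simp only at he
    have k₁ := ht1 r₁ h₁
    have k₂ := ht1 r₂ h₂
    have m₁ := htl r₁
    have m₂ := htl r₂
    rcases eq_or_lt_of_le m₁ with e₁ | e₁ <;> rcases eq_or_lt_of_le m₂ with e₂ | e₂
    · omega
    · rw [e₁, Nat.mod_self, Nat.mod_eq_of_lt e₂] at he
      omega
    · rw [e₂, Nat.mod_self, Nat.mod_eq_of_lt e₁] at he
      omega
    · rw [Nat.mod_eq_of_lt e₁, Nat.mod_eq_of_lt e₂] at he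
      exact he
  have himg : Z.image φ = Finset.range l := by
    apply Finset.eq_of_subset_of_card_le
    · intro y hy
      rw [Finset.mem_image] at hy
      obtain ⟨r, hrZ, rfl⟩ := hy
      rw [Finset.mem_range, hφ]
      exact Nat.mod_lt _ hlpos
    · rw [Finset.card_range, Finset.card_image_of_injOn, hfalse]
      intro r₁ h₁ r₂ h₂ he
      have hz₁ : a r₁ = false := (Finset.mem_filter.mp (Finset.mem_coe.mp h₁)).2
      have hz₂ : a r₂ = false := (Finset.mem_filter.mp (Finset.mem_coe.mp h₂)).2
      exact hφinj r₁ r₂ hz₁ hz₂ he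
  have hrotφ : ∀ r, a r = false →
      badFrom 0 (E.rotate (φ r)) = badFrom 0 (blockify q (lin r)) := by
    intro r hr
    rw [hblockrot r hr]
    congr 1
    rw [hφ]
    simp only
    calc E.rotate (t r % l) = E.rotate (t r % E.length) := by rw [hlenE]
      _ = E.rotate (t r) := List.rotate_mod E (t r)
  -- final counting
  have hlemE := lemE l E hlenE hleE p hp hsumE (l - i)
  have hmin : min l ((l - i) + p) = l + p - i := by omega
  rw [hmin] at hlemE
  set F := (Finset.range l).filter (fun t' => badFrom 0 (E.rotate t') ≤ l - i) with hF
  set G := Z.filter (fun r => badFrom 0 (E.rotate (φ r)) ≤ l - i) with hG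
  have hFsub : F ⊆ G.image φ := by
    intro t' ht'
    rw [hF, Finset.mem_filter] at ht'
    have hmem : t' ∈ Z.image φ := by
      rw [himg]
      exact ht'.1
    rw [Finset.mem_image] at hmem
    obtain ⟨r, hrZ, rfl⟩ := hmem
    rw [Finset.mem_image]
    refine ⟨r, ?_, rfl⟩
    rw [hG, Finset.mem_filter]
    exact ⟨hrZ, ht'.2⟩
  have hFG : F.card ≤ G.card :=
    le_trans (Finset.card_le_card hFsub) Finset.card_image_le
  set S := Finset.univ.filter
    (fun r : ZMod n => a r = false ∧ i ≤ (Dset q a r).ncard) with hS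
  have hGS : G ⊆ S := by
    intro r hrG
    rw [hG, Finset.mem_filter] at hrG
    obtain ⟨hrZ, hcond⟩ := hrG
    have hr : a r = false := (Finset.mem_filter.mp hrZ).2
    rw [hS, Finset.mem_filter]
    refine ⟨Finset.mem_univ _, hr, ?_⟩
    have e1 := hrotφ r hr
    have e2 := hbadN r hr
    have e3 := hDNsum r
    have e4 := hDn r
    omega
  have hfinal : l + p - i ≤ S.card :=
    le_trans hlemE (le_trans hFG (Finset.card_le_card hGS))
  rw [hS] at hfinal
  exact hfinal


end ESCL

/-- (Extended Strong Cycle Lemma) Let `a` be a `(k, qk+p)`-arrangement with `p ≥ 1`.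
For every `i` with `p ≤ i ≤ qk+p`, there are at least `qk+2p−i` zero positions `r`
such that the 0-linearization ending at `r` has at least `i` `q`-good 0-intervals. -/
theorem extended_strong_cycle_lemma (q k p : ℕ) (hp : 1 ≤ p)
    (a : ZMod ((q + 1) * k + p) → Bool)
    (hones : Nat.card {i : ZMod ((q + 1) * k + p) | a i = true} = k) :
    ∀ i : ℕ, p ≤ i → i ≤ q * k + p →
      q * k + 2 * p - i ≤
        Nat.card {r : ZMod ((q + 1) * k + p) | a r = false ∧ i ≤ (Dset q a r).ncard} := by
  intro i hpi hil
  haveI : NeZero ((q + 1) * k + p) := ⟨by positivity⟩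
  have htrue : (Finset.univ.filter
      (fun r : ZMod ((q + 1) * k + p) => a r = true)).card = k := by
    have h1 : Nat.card {i : ZMod ((q + 1) * k + p) | a i = true}
        = (Finset.univ.filter
            (fun r : ZMod ((q + 1) * k + p) => a r = true)).card := by
      rw [Nat.card_coe_set_eq, Set.ncard_eq_toFinset_card', Set.toFinset_setOf]
    rw [← h1, hones]
  have hnl : (q + 1) * k + p = (q * k + p) + k := by ring
  have haux := ESCL.escl_aux q k p hp ((q + 1) * k + p) (q * k + p) hnl rfl a htrue
    i hpi hil
  have hNat : Nat.card {r : ZMod ((q + 1) * k + p) |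
        a r = false ∧ i ≤ (Dset q a r).ncard}
      = (Finset.univ.filter
          (fun r : ZMod ((q + 1) * k + p) =>
            a r = false ∧ i ≤ (Dset q a r).ncard)).card := by
    rw [Nat.card_coe_set_eq, Set.ncard_eq_toFinset_card', Set.toFinset_setOf]
  rw [hNat]
  have : q * k + 2 * p - i ≤ (q * k + p) + p - i := by omega
  exact le_trans this haux
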